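/- There exists a constant c > 0 such that for all positive integers n, Σ_{a=1}^{n−1} C(n,a)·a^a·(n−a)^{n−a} ≤ c·n^{n+1/2}. -/

import Mathlib

open scoped Classical

/-- Number of connected components of a graph. -/
noncomputable def kappa {V : Type*} (G : SimpleGraph V) : ℕ :=
  Nat.card G.ConnectedComponent

/-- Number of bridges of a graph. -/
noncomputable def numBridges {V : Type*} (G : SimpleGraph V) : ℕ :=
  {e : Sym2 V | G.IsBridge e}.ncard

/-- Number of unordered pairs of vertices lying in distinct components. -/
noncomputable def cross {V : Type*} (G : SimpleGraph V) : ℕ :=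
  {p : Sym2 V | ∃ u v : V, p = s(u, v) ∧ ¬ G.Reachable u v}.ncard

/-- Number of vertices outside a largest component. -/
noncomputable def frag {V : Type*} [Fintype V] (G : SimpleGraph V) : ℕ :=
  Fintype.card V - ⨆ c : G.ConnectedComponent, c.supp.ncard

/-- The graph obtained by deleting all bridges. -/
def debridge {V : Type*} (G : SimpleGraph V) : SimpleGraph V :=
  G.deleteEdges {e : Sym2 V | G.IsBridge e}

/-- The weight τ(G) = f(G̃) · λ^{e₀(G)} · ν^{κ(G)}. -/
noncomputable def tau {V : Type*} (f : SimpleGraph V → ℝ) (lam nu : ℝ)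
    (G : SimpleGraph V) : ℝ :=
  f (debridge G) * lam ^ numBridges G * nu ^ kappa G

/-- Adding the edge uv to a graph. -/
def addEdge {V : Type*} (G : SimpleGraph V) (u v : V) : SimpleGraph V :=
  G ⊔ SimpleGraph.fromEdgeSet {s(u, v)}

/-- A class of graphs is bridge-addable if adding an edge between two vertices in
distinct components of a member yields a member. -/
def BridgeAddable {V : Type*} (A : Set (SimpleGraph V)) : Prop :=
  ∀ G ∈ A, ∀ u v : V, ¬ G.Reachable u v → addEdge G u v ∈ A

/-- P(Po(α) ≥ t), the upper tail of a Poisson distribution with mean α. -/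
noncomputable def poissonTail (α : ℝ) (t : ℕ) : ℝ :=
  ∑' i : ℕ, if t ≤ i then Real.exp (-α) * α ^ i / (Nat.factorial i) else 0

section StirlingAux
open Real Stirling Finset

lemma sqrt_pi_le_stirlingSeq (n : ℕ) : Real.sqrt Real.pi ≤ stirlingSeq (n + 1) :=
  stirlingSeq'_antitone.le_of_tendsto
    (tendsto_stirlingSeq_sqrt_pi.comp (Filter.tendsto_add_atTop_nat 1)) n

lemma stirlingSeq_le (n : ℕ) : stirlingSeq (n + 1) ≤ Real.exp 1 / Real.sqrt 2 := by
  have := stirlingSeq'_antitone (Nat.zero_le n)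
  simpa [stirlingSeq_one] using this

lemma fac_low (a : ℕ) (ha : 1 ≤ a) :
    Real.sqrt a * ((a : ℝ) / Real.exp 1) ^ a ≤ (Nat.factorial a : ℝ) := by
  have hap : (0:ℝ) < a := by exact_mod_cast ha
  have hd : (0:ℝ) < Real.sqrt (2 * a) * ((a : ℝ) / Real.exp 1) ^ a := by positivity
  obtain ⟨m, rfl⟩ : ∃ m, a = m + 1 := ⟨a - 1, (Nat.succ_pred_eq_of_pos ha).symm⟩
  have hs := sqrt_pi_le_stirlingSeq m
  rw [stirlingSeq, le_div_iff₀ hd] at hs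
  refine le_trans ?_ hs
  have h2 : Real.sqrt (2 * ((m:ℝ)+1)) = Real.sqrt 2 * Real.sqrt ((m:ℝ)+1) := by
    rw [Real.sqrt_mul (by norm_num)]
  have hone : (1:ℝ) ≤ Real.sqrt Real.pi * Real.sqrt 2 := by
    have h1 : (1:ℝ) ≤ Real.sqrt Real.pi :=
      Real.one_le_sqrt.mpr (by linarith [Real.pi_gt_three])
    have h2' : (1:ℝ) ≤ Real.sqrt 2 := Real.one_le_sqrt.mpr (by norm_num)
    nlinarith
  have hpow : (0:ℝ) ≤ (((m:ℝ)+1) / Real.exp 1) ^ (m+1) := by positivity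
  have hsq : (0:ℝ) ≤ Real.sqrt ((m:ℝ)+1) := Real.sqrt_nonneg _
  push_cast
  push_cast at h2
  rw [h2]
  nlinarith [mul_le_mul_of_nonneg_right hone (mul_nonneg hsq hpow)]

lemma fac_up (n : ℕ) (hn : 1 ≤ n) :
    (Nat.factorial n : ℝ) ≤ Real.exp 1 * (Real.sqrt n * ((n : ℝ) / Real.exp 1) ^ n) := by
  have hnp : (0:ℝ) < n := by exact_mod_cast hn
  have hd : (0:ℝ) < Real.sqrt (2 * n) * ((n : ℝ) / Real.exp 1) ^ n := by positivity
  obtain ⟨m, rfl⟩ : ∃ m, n = m + 1 := ⟨n - 1, (Nat.succ_pred_eq_of_pos hn).symm⟩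
  have hs := stirlingSeq_le m
  rw [stirlingSeq, div_le_iff₀ hd] at hs
  refine hs.trans (le_of_eq ?_)
  have h2 : Real.sqrt (2 * (((m:ℕ):ℝ)+1)) = Real.sqrt 2 * Real.sqrt (((m:ℕ):ℝ)+1) := by
    rw [Real.sqrt_mul (by norm_num)]
  have hs2 : Real.sqrt 2 ≠ 0 := by positivity
  push_cast
  push_cast at h2
  rw [h2]
  field_simp

lemma sqrt_add_le (a b : ℝ) (ha : 0 ≤ a) (hb : 0 ≤ b) :
    Real.sqrt (a + b) ≤ Real.sqrt a + Real.sqrt b := by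
  have h := Real.sqrt_le_sqrt (show a + b ≤ (Real.sqrt a + Real.sqrt b)^2 by
    nlinarith [Real.sq_sqrt ha, Real.sq_sqrt hb, Real.sqrt_nonneg a, Real.sqrt_nonneg b])
  rwa [Real.sqrt_sq (by positivity)] at h

lemma choose_bound (a b : ℕ) (ha : 1 ≤ a) (hb : 1 ≤ b) :
    ((a+b).choose a : ℝ) * (a:ℝ)^a * (b:ℝ)^b ≤
      Real.exp 1 * (((a+b) : ℕ):ℝ)^(a+b) * (1/Real.sqrt a + 1/Real.sqrt b) := by
  have hap : (0:ℝ) < a := by exact_mod_cast ha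
  have hbp : (0:ℝ) < b := by exact_mod_cast hb
  have hnp : (0:ℝ) < ((a+b:ℕ):ℝ) := by push_cast; linarith
  have hfac : ((a+b).choose a : ℝ) * (Nat.factorial a) * (Nat.factorial b) =
      (Nat.factorial (a+b) : ℝ) := by
    have h0 : (a+b).choose a * Nat.factorial a * Nat.factorial b = Nat.factorial (a+b) := by
      simpa using Nat.choose_mul_factorial_mul_factorial (Nat.le_add_right a b)
    exact_mod_cast h0
  have hC : (0:ℝ) ≤ ((a+b).choose a : ℝ) := by positivity
  have key : ((a+b).choose a : ℝ) * (Real.sqrt a * ((a:ℝ)/Real.exp 1)^a) *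
      (Real.sqrt b * ((b:ℝ)/Real.exp 1)^b) ≤
      Real.exp 1 * (Real.sqrt ((a+b:ℕ):ℝ) * (((a+b:ℕ):ℝ)/Real.exp 1)^(a+b)) := by
    calc ((a+b).choose a : ℝ) * (Real.sqrt a * ((a:ℝ)/Real.exp 1)^a) *
        (Real.sqrt b * ((b:ℝ)/Real.exp 1)^b)
        ≤ ((a+b).choose a : ℝ) * (Nat.factorial a) * (Nat.factorial b) := by
          gcongr <;> first
            | exact fac_low a ha
            | exact fac_low b hb
      _ = (Nat.factorial (a+b) : ℝ) := hfac
      _ ≤ _ := fac_up (a+b) (by omega)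
  have hep : (0:ℝ) < Real.exp 1 := Real.exp_pos 1
  have key2 : ((a+b).choose a : ℝ) * (a:ℝ)^a * (b:ℝ)^b * (Real.sqrt a * Real.sqrt b) ≤
      Real.exp 1 * Real.sqrt ((a+b:ℕ):ℝ) * ((a+b:ℕ):ℝ)^(a+b) := by
    have h := mul_le_mul_of_nonneg_right key (le_of_lt (pow_pos hep (a+b)))
    have e1 : ((a+b).choose a : ℝ) * (Real.sqrt a * ((a:ℝ)/Real.exp 1)^a) *
        (Real.sqrt b * ((b:ℝ)/Real.exp 1)^b) * (Real.exp 1)^(a+b) =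
        ((a+b).choose a : ℝ) * (a:ℝ)^a * (b:ℝ)^b * (Real.sqrt a * Real.sqrt b) := by
      rw [div_pow, div_pow, pow_add]
      field_simp
    have e2 : Real.exp 1 * (Real.sqrt ((a+b:ℕ):ℝ) * (((a+b:ℕ):ℝ)/Real.exp 1)^(a+b)) *
        (Real.exp 1)^(a+b) = Real.exp 1 * Real.sqrt ((a+b:ℕ):ℝ) * ((a+b:ℕ):ℝ)^(a+b) := by
      rw [div_pow]
      field_simp
      try ring
    rw [e1, e2] at h
    exact h
  have hsa : (0:ℝ) < Real.sqrt a := Real.sqrt_pos.mpr hap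
  have hsb : (0:ℝ) < Real.sqrt b := Real.sqrt_pos.mpr hbp
  have hD : (0:ℝ) < Real.sqrt a * Real.sqrt b := by positivity
  rw [← mul_le_mul_iff_of_pos_right hD]
  have e3 : Real.exp 1 * (((a+b):ℕ):ℝ)^(a+b) * (1/Real.sqrt a + 1/Real.sqrt b) *
      (Real.sqrt a * Real.sqrt b) =
      Real.exp 1 * ((a+b:ℕ):ℝ)^(a+b) * (Real.sqrt b + Real.sqrt a) := by
    field_simp
    try ring
  rw [e3]
  have hab : Real.sqrt ((a+b:ℕ):ℝ) ≤ Real.sqrt a + Real.sqrt b := by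
    push_cast
    exact sqrt_add_le a b (le_of_lt hap) (le_of_lt hbp)
  have hpowpos : (0:ℝ) ≤ Real.exp 1 * ((a+b:ℕ):ℝ)^(a+b) := by positivity
  nlinarith [key2]

lemma sum_inv_sqrt (n : ℕ) :
    ∑ a ∈ Finset.Ico 1 (n+1), (1:ℝ)/Real.sqrt a ≤ 2 * Real.sqrt n := by
  induction n with
  | zero => simp
  | succ m ih =>
    rw [Finset.sum_Ico_succ_top (by omega)]
    have hm1 : (0:ℝ) < Real.sqrt ((m:ℝ)+1) := Real.sqrt_pos.mpr (by positivity)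
    have hstep : (1:ℝ)/Real.sqrt (((m+1:ℕ)):ℝ) ≤
        2 * Real.sqrt ((m+1:ℕ):ℝ) - 2 * Real.sqrt m := by
      push_cast
      rw [div_le_iff₀ hm1]
      have h1 : Real.sqrt (m:ℝ) * Real.sqrt ((m:ℝ)+1) = Real.sqrt ((m:ℝ) * ((m:ℝ)+1)) :=
        (Real.sqrt_mul (Nat.cast_nonneg m) _).symm
      have h2 : Real.sqrt ((m:ℝ) * ((m:ℝ)+1)) ≤ (m:ℝ) + 1/2 := by
        have := Real.sqrt_le_sqrt (show (m:ℝ) * ((m:ℝ)+1) ≤ ((m:ℝ)+1/2)^2 by nlinarith)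
        rwa [Real.sqrt_sq (by positivity)] at this
      nlinarith [Real.sq_sqrt (show (0:ℝ) ≤ (m:ℝ)+1 by positivity)]
    push_cast at hstep ih ⊢
    linarith

lemma sum_inv_sqrt' (n : ℕ) (hn : 1 ≤ n) :
    ∑ a ∈ Finset.Ico 1 n, (1:ℝ)/Real.sqrt a ≤ 2 * Real.sqrt n := by
  obtain ⟨m, rfl⟩ : ∃ m, n = m + 1 := ⟨n - 1, (Nat.succ_pred_eq_of_pos hn).symm⟩
  refine (sum_inv_sqrt m).trans ?_
  have : Real.sqrt (m:ℝ) ≤ Real.sqrt ((m:ℝ)+1) := Real.sqrt_le_sqrt (by linarith)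
  push_cast
  linarith

end StirlingAux

/-- there is a constant `c > 0` with
`Σ_{a=1}^{n−1} C(n,a)·a^a·(n−a)^{n−a} ≤ c·n^{n+1/2}` for all positive integers `n`. -/
theorem stmt19 :
    ∃ c : ℝ, 0 < c ∧ ∀ n : ℕ, 1 ≤ n →
      ∑ a ∈ Finset.Ico 1 n, ((n.choose a : ℝ) * (a : ℝ) ^ a *
          ((n - a : ℕ) : ℝ) ^ (n - a)) ≤
        c * (n : ℝ) ^ n * Real.sqrt n := by
  refine ⟨4 * Real.exp 1, by positivity, fun n hn => ?_⟩
  have step1 : ∑ a ∈ Finset.Ico 1 n, ((n.choose a : ℝ) * (a : ℝ) ^ a *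
      ((n - a : ℕ) : ℝ) ^ (n - a)) ≤
      ∑ a ∈ Finset.Ico 1 n, (Real.exp 1 * (n:ℝ)^n *
        (1/Real.sqrt a + 1/Real.sqrt ((n - a : ℕ) : ℝ))) := by
    refine Finset.sum_le_sum fun a hamem => ?_
    rw [Finset.mem_Ico] at hamem
    obtain ⟨ha1, ha2⟩ := hamem
    have hab : a + (n - a) = n := by omega
    have hb1 : 1 ≤ n - a := by omega
    calc (n.choose a : ℝ) * (a : ℝ) ^ a * ((n - a : ℕ) : ℝ) ^ (n - a)
        = ((a + (n-a)).choose a : ℝ) * (a : ℝ) ^ a * ((n - a : ℕ) : ℝ) ^ (n - a) := by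
          rw [hab]
      _ ≤ Real.exp 1 * (((a + (n-a)) : ℕ):ℝ)^(a + (n-a)) *
            (1/Real.sqrt a + 1/Real.sqrt ((n-a : ℕ):ℝ)) := choose_bound a (n-a) ha1 hb1
      _ = Real.exp 1 * (n:ℝ)^n * (1/Real.sqrt a + 1/Real.sqrt ((n-a : ℕ):ℝ)) := by
          rw [hab]
  refine step1.trans ?_
  rw [← Finset.mul_sum]
  have hrefl : ∑ a ∈ Finset.Ico 1 n, (1:ℝ)/Real.sqrt ((n-a:ℕ):ℝ) =
      ∑ a ∈ Finset.Ico 1 n, (1:ℝ)/Real.sqrt a := by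
    have h := Finset.sum_Ico_reflect (fun j : ℕ => (1:ℝ)/Real.sqrt j) 1
      (show n ≤ n + 1 by omega)
    simpa using h
  rw [Finset.sum_add_distrib, hrefl]
  have hS := sum_inv_sqrt' n hn
  have hE : (0:ℝ) ≤ Real.exp 1 * (n:ℝ)^n := by positivity
  calc Real.exp 1 * (n:ℝ)^n *
        (∑ a ∈ Finset.Ico 1 n, (1:ℝ)/Real.sqrt a + ∑ a ∈ Finset.Ico 1 n, (1:ℝ)/Real.sqrt a)
      ≤ Real.exp 1 * (n:ℝ)^n * (4 * Real.sqrt n) :=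
        mul_le_mul_of_nonneg_left (by linarith) hE
    _ = 4 * Real.exp 1 * (n:ℝ)^n * Real.sqrt n := by ring
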